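/- Let F₁,…,F₅ be pairwise non-proportional linear forms in ℂ[x,y,z] and Gᵢ = (F₁⋯F₅)/Fᵢ. Then the degree-5 graded piece of the ideal I = (G₁,…,G₅) has ℂ-vector-space dimension exactly 11. -/

import Mathlib

open MvPolynomial Finset


lemma deg_one_single {d : Fin 3 →₀ ℕ} (hd : d.degree = 1) :
    ∃ j, d = Finsupp.single j 1 := by
  have hne : d ≠ 0 := by
    intro h; rw [h] at hd; simp at hd
  obtain ⟨j, hj⟩ := Finsupp.ne_iff.mp hne
  simp only [Finsupp.coe_zero, Pi.zero_apply] at hj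
  refine ⟨j, ?_⟩
  have hj1 : d j = 1 := le_antisymm (hd ▸ Finsupp.le_degree j d) (Nat.one_le_iff_ne_zero.mpr hj)
  ext k
  rcases eq_or_ne k j with rfl | hk
  · simp [hj1]
  · rw [Finsupp.single_apply, if_neg (Ne.symm hk)]
    by_contra hk0
    have hsub : ({j, k} : Finset (Fin 3)) ⊆ d.support := by
      intro x hx
      simp only [Finset.mem_insert, Finset.mem_singleton] at hx
      rcases hx with rfl | rfl
      · exact Finsupp.mem_support_iff.mpr hj
      · exact Finsupp.mem_support_iff.mpr hk0
    have := Finset.sum_le_sum_of_subset hsub (f := fun x => d x)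
    rw [Finset.sum_pair (Ne.symm hk)] at this
    have : d j + d k ≤ 1 := by
      calc d j + d k ≤ ∑ x ∈ d.support, d x := this
      _ = 1 := hd
    omega

lemma degree_single_one (j : Fin 3) : (Finsupp.single j 1 : Fin 3 →₀ ℕ).degree = 1 := by
  simp [Finsupp.degree, Finsupp.support_single_ne_zero _ one_ne_zero]
  exact (by simp [Finsupp.support_single_ne_zero _ one_ne_zero] : ∑ i ∈ (Finsupp.single j 1 : Fin 3 →₀ ℕ).support, (Finsupp.single j 1 : Fin 3 →₀ ℕ) i = 1)

lemma coeff_lin (b : Fin 3 → ℂ) (j : Fin 3) :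
    coeff (Finsupp.single j 1) (∑ j', b j' • (X j' : MvPolynomial (Fin 3) ℂ)) = b j := by
  classical
  rw [MvPolynomial.coeff_sum]
  simp only [MvPolynomial.coeff_smul, MvPolynomial.coeff_X', smul_eq_mul]
  rw [Finset.sum_eq_single j]
  · simp
  · intro k _ hk
    rw [if_neg, mul_zero]
    exact fun h => hk (by
      have := (Finsupp.single_eq_single_iff _ _ _ _).mp h
      rcases this with ⟨h1, _⟩ | ⟨h1, _⟩
      · exact h1
      · exact absurd h1 one_ne_zero)
  · simp

lemma rep1 {L : MvPolynomial (Fin 3) ℂ} (h : L.IsHomogeneous 1) :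
    (∑ j, (coeff (Finsupp.single j 1) L) • (X j : MvPolynomial (Fin 3) ℂ)) = L := by
  classical
  apply MvPolynomial.ext
  intro d
  rcases eq_or_ne d.degree 1 with hd | hd
  · obtain ⟨j, rfl⟩ := deg_one_single hd
    rw [coeff_lin]
  · rw [h.coeff_eq_zero hd, MvPolynomial.coeff_sum]
    apply Finset.sum_eq_zero
    intro j _
    rw [MvPolynomial.coeff_smul, MvPolynomial.coeff_X', if_neg, smul_zero]
    intro hs
    exact hd (hs ▸ degree_single_one j)


lemma hcomp_mul {m : ℕ} {g : MvPolynomial (Fin 3) ℂ} (hg : g.IsHomogeneous m)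
    (n : ℕ) (c : MvPolynomial (Fin 3) ℂ) :
    homogeneousComponent (n + m) (c * g) = homogeneousComponent n c * g := by
  classical
  have hrw : c * g = ∑ k ∈ Finset.range (c.totalDegree + 1), homogeneousComponent k c * g := by
    rw [← Finset.sum_mul, sum_homogeneousComponent]
  rw [hrw, map_sum]
  have hterm : ∀ k, homogeneousComponent (n + m) (homogeneousComponent k c * g)
      = if n = k then homogeneousComponent k c * g else 0 := by
    intro k
    have hmem : homogeneousComponent k c * g ∈ homogeneousSubmodule (Fin 3) ℂ (k + m) :=
      (mem_homogeneousSubmodule _ _).mpr ((homogeneousComponent_isHomogeneous k c).mul hg)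
    rw [homogeneousComponent_of_mem hmem]
    congr 1
    simp [Nat.add_right_cancel_iff]
  simp_rw [hterm]
  rw [Finset.sum_ite_eq]
  by_cases hn : n ∈ Finset.range (c.totalDegree + 1)
  · rw [if_pos hn]
  · rw [if_neg hn, homogeneousComponent_eq_zero, zero_mul]
    rw [Finset.mem_range] at hn
    omega

lemma top_ne {a : MvPolynomial (Fin 3) ℂ} (ha : a ≠ 0) :
    homogeneousComponent a.totalDegree a ≠ 0 := by
  classical
  have hsup : a.support.Nonempty := MvPolynomial.support_nonempty.mpr ha
  obtain ⟨d, hd, hdeg⟩ := Finset.exists_mem_eq_sup _ hsup (fun s => s.sum fun _ e => e)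
  intro h0
  have : coeff d (homogeneousComponent a.totalDegree a) = coeff d a := by
    rw [coeff_homogeneousComponent, if_pos]
    rw [MvPolynomial.totalDegree, hdeg]
    simp [Finsupp.degree, Finsupp.sum]
    rfl
  rw [h0] at this
  exact MvPolynomial.mem_support_iff.mp hd this.symm

lemma top_mul {a b : MvPolynomial (Fin 3) ℂ} (ha : a ≠ 0) (hb : b ≠ 0) :
    homogeneousComponent (a.totalDegree + b.totalDegree) (a * b)
      = homogeneousComponent a.totalDegree a * homogeneousComponent b.totalDegree b := by
  classical
  set da := a.totalDegree
  set db := b.totalDegree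
  have hrw : a * b = ∑ k ∈ Finset.range (da + 1), ∑ l ∈ Finset.range (db + 1),
      homogeneousComponent k a * homogeneousComponent l b := by
    rw [← Finset.sum_mul_sum, sum_homogeneousComponent, sum_homogeneousComponent]
  rw [hrw, map_sum]
  have hterm : ∀ k l, homogeneousComponent (da + db)
      (homogeneousComponent k a * homogeneousComponent l b)
      = if da + db = k + l then homogeneousComponent k a * homogeneousComponent l b else 0 := by
    intro k l
    exact homogeneousComponent_of_mem ((mem_homogeneousSubmodule _ _).mpr
      ((homogeneousComponent_isHomogeneous k a).mul (homogeneousComponent_isHomogeneous l b)))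
  rw [Finset.sum_eq_single_of_mem da (by simp)]
  · rw [map_sum, Finset.sum_eq_single_of_mem db (by simp)]
    · rw [hterm, if_pos rfl]
    · intro l hl hlne
      rw [hterm, if_neg]
      rw [Finset.mem_range] at hl
      omega
  · intro k hk hkne
    rw [map_sum]
    apply Finset.sum_eq_zero
    intro l hl
    rw [hterm, if_neg]
    rw [Finset.mem_range] at hk hl
    omega

lemma eq_C_of_td_zero {a : MvPolynomial (Fin 3) ℂ} (h : a.totalDegree = 0) :
    a = C (coeff 0 a) := by
  conv_lhs => rw [← sum_homogeneousComponent a]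
  rw [h]
  simp

lemma td_add_le {a b : MvPolynomial (Fin 3) ℂ} (ha : a ≠ 0) (hb : b ≠ 0) :
    a.totalDegree + b.totalDegree ≤ (a * b).totalDegree := by
  by_contra hlt
  push_neg at hlt
  have h0 : homogeneousComponent (a.totalDegree + b.totalDegree) (a * b) = 0 :=
    homogeneousComponent_eq_zero _ _ hlt
  rw [top_mul ha hb] at h0
  exact mul_ne_zero (top_ne ha) (top_ne hb) h0

lemma prime_of_lin {F : MvPolynomial (Fin 3) ℂ} (h1 : F.IsHomogeneous 1) (h0 : F ≠ 0) :
    Prime F := by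
  rw [← UniqueFactorizationMonoid.irreducible_iff_prime]
  have hdF : F.totalDegree = 1 := h1.totalDegree h0
  constructor
  · intro hu
    obtain ⟨g, hg⟩ := isUnit_iff_exists_inv.mp hu
    have hg0 : g ≠ 0 := by rintro rfl; simp at hg
    have := td_add_le h0 hg0
    rw [hg, hdF, MvPolynomial.totalDegree_one] at this
    omega
  · intro a b hab
    have ha0 : a ≠ 0 := by rintro rfl; simp at hab; exact h0 hab
    have hb0 : b ≠ 0 := by rintro rfl; simp at hab; exact h0 hab
    have hle : a.totalDegree + b.totalDegree ≤ 1 := by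
      have := td_add_le ha0 hb0
      rw [← hab, hdF] at this
      exact this
    have key : ∀ p : MvPolynomial (Fin 3) ℂ, p ≠ 0 → p.totalDegree = 0 → IsUnit p := by
      intro p hp0 hptd
      rw [eq_C_of_td_zero hptd]
      apply IsUnit.map
      apply isUnit_iff_ne_zero.mpr
      intro hc
      apply hp0
      rw [eq_C_of_td_zero hptd, hc, map_zero]
    rcases Nat.eq_zero_or_pos a.totalDegree with h | h
    · exact Or.inl (key a ha0 h)
    · exact Or.inr (key b hb0 (by omega))

lemma smul_of_dvd {F L : MvPolynomial (Fin 3) ℂ} (hF1 : F.IsHomogeneous 1)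
    (hL : L.IsHomogeneous 1) (hd : F ∣ L) : ∃ c : ℂ, L = c • F := by
  obtain ⟨q, hq⟩ := hd
  refine ⟨coeff 0 q, ?_⟩
  have h5 : L = homogeneousComponent 1 L := by
    rw [homogeneousComponent_of_mem ((mem_homogeneousSubmodule _ _).mpr hL), if_pos rfl]
  rw [h5, hq, mul_comm]
  have := hcomp_mul hF1 0 q
  rw [zero_add] at this
  rw [this, homogeneousComponent_zero, smul_eq_C_mul]

/-- If `F₁,…,F₅` are pairwise non-proportional linear forms in `ℂ[x,y,z]` and
`Gᵢ = (F₁⋯F₅)/Fᵢ`, then the degree-5 graded piece of the ideal `I = (G₁,…,G₅)`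
has ℂ-dimension exactly 11. -/
theorem degree_five_piece_of_ideal
    (F G : Fin 5 → MvPolynomial (Fin 3) ℂ)
    (hF1 : ∀ i, (F i).IsHomogeneous 1) (hF0 : ∀ i, F i ≠ 0)
    (hFdist : ∀ i j, i ≠ j → ∀ c : ℂ, F j ≠ c • F i)
    (hG : ∀ i, G i = ∏ j ∈ Finset.univ.erase i, F j) :
    Module.finrank ℂ
      ↥((Submodule.restrictScalars ℂ
          (Ideal.span (Set.range G) : Ideal (MvPolynomial (Fin 3) ℂ))) ⊓
        (MvPolynomial.homogeneousSubmodule (Fin 3) ℂ 5)) = 11 := by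
  classical
  -- basic facts
  have hG4 : ∀ i, (G i).IsHomogeneous 4 := by
    intro i
    rw [hG]
    have := MvPolynomial.IsHomogeneous.prod (Finset.univ.erase i) F (fun _ => 1)
      (fun j _ => hF1 j)
    simpa using this
  set P : MvPolynomial (Fin 3) ℂ := ∏ j, F j with hP
  have hFG : ∀ i, F i * G i = P := by
    intro i
    rw [hG]
    exact Finset.mul_prod_erase Finset.univ F (Finset.mem_univ i)
  have hP0 : P ≠ 0 := Finset.prod_ne_zero_iff.mpr fun i _ => hF0 i
  -- the linear map φ
  let φ : (Fin 5 → Fin 3 → ℂ) →ₗ[ℂ] MvPolynomial (Fin 3) ℂ :=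
    { toFun := fun a => ∑ i, (∑ j, a i j • X j) * G i
      map_add' := by
        intro a b
        simp [add_smul, Finset.sum_add_distrib, add_mul]
      map_smul' := by
        intro c a
        simp only [Pi.smul_apply, smul_eq_mul, RingHom.id_apply]
        rw [Finset.smul_sum]
        congr 1; funext i
        rw [← smul_mul_assoc, Finset.smul_sum]
        congr 2; funext j
        rw [smul_smul] }
  have hφ : ∀ a, φ a = ∑ i, (∑ j, a i j • X j) * G i := fun a => rfl
  -- range of φ equals the submodule in question
  have hrange : LinearMap.range φ =
      (Submodule.restrictScalars ℂ
          (Ideal.span (Set.range G) : Ideal (MvPolynomial (Fin 3) ℂ))) ⊓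
        (MvPolynomial.homogeneousSubmodule (Fin 3) ℂ 5) := by
    apply le_antisymm
    · rintro _ ⟨a, rfl⟩
      rw [hφ]
      constructor
      · show (∑ i, (∑ j, a i j • X j) * G i) ∈ Ideal.span (Set.range G)
        apply Submodule.sum_mem
        intro i _
        exact Ideal.mul_mem_left _ _ (Ideal.subset_span ⟨i, rfl⟩)
      · show (∑ i, (∑ j, a i j • X j) * G i) ∈ homogeneousSubmodule (Fin 3) ℂ 5
        apply Submodule.sum_mem
        intro i _
        rw [mem_homogeneousSubmodule]
        have hL : (∑ j, a i j • (X j : MvPolynomial (Fin 3) ℂ)).IsHomogeneous 1 := by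
          rw [← mem_homogeneousSubmodule]
          apply Submodule.sum_mem
          intro j _
          exact Submodule.smul_mem _ _ ((mem_homogeneousSubmodule _ _).mpr (isHomogeneous_X ℂ j))
        exact hL.mul (hG4 i)
    · rintro p ⟨hp1, hp2⟩
      have hp1' : p ∈ Ideal.span (Set.range G) := hp1
      rw [Ideal.mem_span_range_iff_exists_fun] at hp1'
      obtain ⟨c, hc⟩ := hp1'
      set L : Fin 5 → MvPolynomial (Fin 3) ℂ := fun i => homogeneousComponent 1 (c i) with hLdef
      have hL1 : ∀ i, (L i).IsHomogeneous 1 := fun i => homogeneousComponent_isHomogeneous 1 (c i)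
      have hp5 : p = ∑ i, L i * G i := by
        have h1 : p = homogeneousComponent 5 p := by
          rw [homogeneousComponent_of_mem hp2, if_pos rfl]
        conv_lhs => rw [h1, ← hc]
        rw [map_sum]
        congr 1; funext i
        have := hcomp_mul ((mem_homogeneousSubmodule _ _).mp ((mem_homogeneousSubmodule _ _).mpr (hG4 i))) 1 (c i)
        simpa using this
      refine ⟨fun i j => coeff (Finsupp.single j 1) (L i), ?_⟩
      rw [hφ, hp5]
      congr 1; funext i
      rw [rep1 (hL1 i)]
  -- the sum functional
  let σs : (Fin 5 → ℂ) →ₗ[ℂ] ℂ :=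
    { toFun := fun c => ∑ i, c i
      map_add' := by intro a b; simp [Finset.sum_add_distrib]
      map_smul' := by intro r a; simp [Finset.mul_sum] }
  -- θ
  let θ : (Fin 5 → ℂ) →ₗ[ℂ] (Fin 5 → Fin 3 → ℂ) :=
    { toFun := fun c i j => c i * coeff (Finsupp.single j 1) (F i)
      map_add' := by intro a b; funext i j; simp [add_mul]
      map_smul' := by intro r a; funext i j; simp [mul_assoc]  }
  have hθF : ∀ (c : Fin 5 → ℂ) (i), (∑ j, (θ c) i j • (X j : MvPolynomial (Fin 3) ℂ))
      = c i • F i := by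
    intro c i
    show (∑ j, (c i * coeff (Finsupp.single j 1) (F i)) • (X j : MvPolynomial (Fin 3) ℂ)) = _
    rw [← rep1 (hF1 i), Finset.smul_sum]
    congr 1; funext j
    rw [smul_smul]
    congr 1
    rw [coeff_lin]
  have hφθ : ∀ c, φ (θ c) = (∑ i, c i) • P := by
    intro c
    rw [hφ, Finset.sum_smul]
    congr 1; funext i
    rw [hθF, smul_mul_assoc, hFG]
  have hθinj : Function.Injective θ := by
    intro c d hcd
    funext i
    obtain ⟨j, hj⟩ : ∃ j, coeff (Finsupp.single j 1) (F i) ≠ 0 := by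
      by_contra hall
      push_neg at hall
      apply hF0 i
      rw [← rep1 (hF1 i)]
      apply Finset.sum_eq_zero
      intro j _
      rw [hall j, zero_smul]
    have := congrFun (congrFun hcd i) j
    exact mul_right_cancel₀ hj this
  -- kernel of φ
  have hker : LinearMap.ker φ = (LinearMap.ker σs).map θ := by
    apply le_antisymm
    · intro a ha
      rw [LinearMap.mem_ker] at ha
      rw [hφ] at ha
      set L : Fin 5 → MvPolynomial (Fin 3) ℂ := fun i => ∑ j, a i j • X j with hLdef
      have hL1 : ∀ i, (L i).IsHomogeneous 1 := by
        intro i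
        rw [← mem_homogeneousSubmodule]
        apply Submodule.sum_mem
        intro j _
        exact Submodule.smul_mem _ _ ((mem_homogeneousSubmodule _ _).mpr (isHomogeneous_X ℂ j))
      have hdvd : ∀ i, F i ∣ L i := by
        intro i
        have hnegs : L i * G i = - ∑ k ∈ Finset.univ.erase i, L k * G k := by
          rw [eq_neg_iff_add_eq_zero,
            Finset.add_sum_erase Finset.univ (fun k => L k * G k) (Finset.mem_univ i)]
          exact ha
        have hdiv : F i ∣ ∑ k ∈ Finset.univ.erase i, L k * G k := by
          apply Finset.dvd_sum
          intro k hk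
          apply dvd_mul_of_dvd_right
          rw [hG]
          exact Finset.dvd_prod_of_mem F (by
            rw [Finset.mem_erase]
            exact ⟨(Finset.ne_of_mem_erase hk).symm, Finset.mem_univ i⟩)
        have : F i ∣ L i * G i := by
          rw [hnegs]
          exact (dvd_neg).mpr hdiv
        rcases (prime_of_lin (hF1 i) (hF0 i)).2.2 _ _ this with h | h
        · exact h
        · exfalso
          rw [hG] at h
          obtain ⟨k, hk, hdk⟩ := (prime_of_lin (hF1 i) (hF0 i)).exists_mem_finset_dvd h
          obtain ⟨ck, hck⟩ := smul_of_dvd (hF1 i) (hF1 k) hdk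
          exact hFdist i k (Finset.ne_of_mem_erase hk).symm ck hck
      choose cc hcc using fun i => smul_of_dvd (hF1 i) (hL1 i) (hdvd i)
      have hsum0 : ∑ i, cc i = 0 := by
        have : (∑ i, cc i) • P = 0 := by
          rw [← ha, Finset.sum_smul]
          congr 1; funext i
          show cc i • P = L i * G i
          rw [hcc i, smul_mul_assoc, hFG i]
        rcases smul_eq_zero.mp this with h | h
        · exact h
        · exact absurd h hP0
      refine ⟨cc, ?_, ?_⟩
      · exact hsum0
      · funext i j
        show cc i * coeff (Finsupp.single j 1) (F i) = a i j
        have h1 : coeff (Finsupp.single j 1) (L i) = a i j := coeff_lin (a i) j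
        rw [← h1, hcc i, MvPolynomial.coeff_smul, smul_eq_mul]
    · rintro _ ⟨c, hc, rfl⟩
      rw [LinearMap.mem_ker, hφθ]
      have : ∑ i, c i = 0 := hc
      rw [this, zero_smul]
  -- finrank computations
  have hkerdim : Module.finrank ℂ (LinearMap.ker φ) = 4 := by
    rw [hker]
    rw [← LinearEquiv.finrank_eq ((LinearMap.ker σs).equivMapOfInjective θ hθinj)]
    have hsurj : Function.Surjective σs := by
      intro x
      refine ⟨fun _ => x / 5, ?_⟩
      show ∑ _i : Fin 5, x / 5 = x
      rw [Finset.sum_const]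
      simp
      ring
    have h1 := LinearMap.finrank_range_add_finrank_ker σs
    rw [LinearMap.range_eq_top.mpr hsurj] at h1
    rw [Module.finrank_fintype_fun_eq_card] at h1
    simp only [finrank_top, Module.finrank_self, Fintype.card_fin] at h1
    omega
  have hdom : Module.finrank ℂ (Fin 5 → Fin 3 → ℂ) = 15 := by
    rw [Module.finrank_pi_fintype]
    simp [Module.finrank_fintype_fun_eq_card]
  have h2 := LinearMap.finrank_range_add_finrank_ker φ
  rw [hrange, hkerdim, hdom] at h2
  omega
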